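/- Let F ⊆ V×V be a loop-free arc set with |F| ≤ k such that (G△F, σ) is a BMG, and let s_1, s_2 ∈ S be vertices such that G△F contains arcs (x_1,s_1) and (x_2,s_2) for some x_1 ∈ X_i and x_2 ∈ X_j with i ≠ j. Then neither (s_1,s_2) nor (s_2,s_1) is an arc of G△F. -/

import Mathlib

/-- A rooted phylogenetic tree with leaf set `V`, encoded by its hierarchy of clusters
(the cluster of a vertex is the set of leaves below it; inner vertices of a phylogenetic
tree have at least two children, so vertices correspond bijectively to clusters). -/
structure PhyloTree (V : Type*) where
  clusters : Set (Set V)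
  nonempty_of_mem : ∀ A ∈ clusters, A.Nonempty
  univ_mem : Set.univ ∈ clusters
  singleton_mem : ∀ v : V, {v} ∈ clusters
  nested : ∀ A ∈ clusters, ∀ B ∈ clusters, A ⊆ B ∨ B ⊆ A ∨ Disjoint A B

namespace PhyloTree

variable {V : Type*}

/-- The cluster of the last common ancestor of `x` and `y`: the smallest cluster
containing both (the clusters containing `x` and `y` form a chain, so their
intersection is the smallest one). -/
def lca (T : PhyloTree V) (x y : V) : Set V :=
  ⋂₀ {A | A ∈ T.clusters ∧ x ∈ A ∧ y ∈ A}

/-- The rooted triple `xy|z` (on three pairwise distinct leaves) is displayed by `T`: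
`lca(x,y) ≺ lca(x,z) = lca(y,z)`. -/
def Displays (T : PhyloTree V) (x y z : V) : Prop :=
  x ≠ y ∧ x ≠ z ∧ y ≠ z ∧ T.lca x y ⊂ T.lca x z ∧ T.lca x z = T.lca y z

/-- `T` displays every triple of `R`; a triple `(x, y, z)` encodes `xy|z`. -/
def DisplaysSet (T : PhyloTree V) (R : Set (V × V × V)) : Prop :=
  ∀ t ∈ R, T.Displays t.1 t.2.1 t.2.2

/-- `r(T)`, the set of triples displayed by `T`. -/
def triples (T : PhyloTree V) : Set (V × V × V) :=
  {t | T.Displays t.1 t.2.1 t.2.2}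

/-- `T` is binary: every inner vertex (cluster with at least two leaves) has exactly
two children, i.e. splits into two disjoint proper subclusters. -/
def IsBinary (T : PhyloTree V) : Prop :=
  ∀ A ∈ T.clusters, 1 < A.ncard →
    ∃ B ∈ T.clusters, ∃ D ∈ T.clusters,
      Disjoint B D ∧ B ∪ D = A ∧ B ⊂ A ∧ D ⊂ A

/-- `T'` is a refinement of `T`: they have the same leaf set and `T` is obtained from
`T'` by contracting inner edges, i.e. every cluster of `T` is a cluster of `T'`. -/
def Refines (T' T : PhyloTree V) : Prop :=
  T.clusters ⊆ T'.clusters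

end PhyloTree

section BMG

variable {V C : Type*}

/-- `y` is a best match of `x` in the leaf-colored tree `(T,σ)`. -/
def bestMatch (T : PhyloTree V) (σ : V → C) (x y : V) : Prop :=
  σ x ≠ σ y ∧ ∀ y' : V, σ y' = σ y → T.lca x y ⊆ T.lca x y'

/-- The leaf-colored tree `(T,σ)` explains the vertex-colored digraph `(E,σ)`,
i.e. `(E,σ)` is the best match graph of `(T,σ)`. -/
def Explains (T : PhyloTree V) (σ : V → C) (E : V → V → Prop) : Prop :=
  ∀ x y, E x y ↔ bestMatch T σ x y

/-- `(E,σ)` is a best match graph. -/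
def IsBMG (E : V → V → Prop) (σ : V → C) : Prop :=
  ∃ T : PhyloTree V, Explains T σ E

/-- `(E,σ)` is binary-explainable. -/
def BinaryExplainable (E : V → V → Prop) (σ : V → C) : Prop :=
  ∃ T : PhyloTree V, T.IsBinary ∧ Explains T σ E

/-- The informative triples `R(G,σ)`: `(a,b,b')` encodes `ab|b'`. -/
def informativeTriples (E : V → V → Prop) (σ : V → C) : Set (V × V × V) :=
  {t | σ t.1 ≠ σ t.2.1 ∧ σ t.2.1 = σ t.2.2 ∧ E t.1 t.2.1 ∧ ¬ E t.1 t.2.2}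

/-- The forbidden triples `F(G,σ)`: `(a,b,b')` encodes `ab|b'`. -/
def forbiddenTriples (E : V → V → Prop) (σ : V → C) : Set (V × V × V) :=
  {t | σ t.1 ≠ σ t.2.1 ∧ σ t.2.1 = σ t.2.2 ∧ t.2.1 ≠ t.2.2 ∧ E t.1 t.2.1 ∧ E t.1 t.2.2}

/-- The extended triple set `R^bin(G,σ) = R(G,σ) ∪ {bb'|a : ab|b' ∈ F(G,σ)}`. -/
def Rbin (E : V → V → Prop) (σ : V → C) : Set (V × V × V) :=
  informativeTriples E σ ∪ {t | (t.2.2, t.1, t.2.1) ∈ forbiddenTriples E σ}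

/-- Properly colored: arcs only between vertices of distinct colors. -/
def ProperlyColored (E : V → V → Prop) (σ : V → C) : Prop :=
  ∀ x y, E x y → σ x ≠ σ y

/-- sf-colored: properly colored and every vertex has, for each color (of the graph)
different from its own, at least one out-neighbor of that color. -/
def SfColored (E : V → V → Prop) (σ : V → C) : Prop :=
  ProperlyColored E σ ∧ ∀ x y : V, σ y ≠ σ x → ∃ z, E x z ∧ σ z = σ y

/-- A triple set is consistent if some tree displays all of its triples. -/
def Consistent (R : Set (V × V × V)) : Prop :=
  ∃ T : PhyloTree V, T.DisplaysSet R

/-- The closure `cl(R)`: all triples displayed by every tree displaying `R`. -/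
def tripleClosure (R : Set (V × V × V)) : Set (V × V × V) :=
  {t | ∀ T : PhyloTree V, T.DisplaysSet R → T.Displays t.1 t.2.1 t.2.2}

/-- `(T,σ)` is a least resolved tree for `(E,σ)`: it explains `(E,σ)` and no tree
obtained from it by contracting an edge (i.e. by removing a non-root inner cluster)
explains `(E,σ)`. -/
def IsLRT (T : PhyloTree V) (σ : V → C) (E : V → V → Prop) : Prop :=
  Explains T σ E ∧
    ∀ A ∈ T.clusters, A ≠ Set.univ → 1 < A.ncard →
      ∀ T' : PhyloTree V, T'.clusters = T.clusters \ {A} → ¬ Explains T' σ E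

end BMG

section Aho

variable {V : Type*}

/-- Adjacency in the Aho graph `[R,L]`: `x` and `y` are joined whenever `xy|z ∈ R`
for some `z ∈ L` (only triples with all leaves in `L` are taken into account). -/
def ahoAdj (R : Set (V × V × V)) (L : Set V) (x y : V) : Prop :=
  x ∈ L ∧ y ∈ L ∧ ∃ z ∈ L, (x, y, z) ∈ R ∨ (y, x, z) ∈ R

/-- The vertex set of the connected component of `x` in the Aho graph `[R,L]`. -/
def ahoComponent (R : Set (V × V × V)) (L : Set V) (x : V) : Set V :=
  {y | Relation.ReflTransGen (ahoAdj R L) x y}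

/-- The clusters of the Aho tree `Aho(R, V)`: the full leaf set, and recursively the
connected components of the Aho graphs. -/
inductive IsAhoCluster (R : Set (V × V × V)) : Set V → Prop
  | univ : IsAhoCluster R Set.univ
  | component {L : Set V} {x : V} :
      IsAhoCluster R L → x ∈ L → IsAhoCluster R (ahoComponent R L x)

/-- `T` is the Aho tree (`BUILD` tree) of the triple set `R` on the full leaf set. -/
def IsAhoTree (R : Set (V × V × V)) (T : PhyloTree V) : Prop :=
  T.clusters = {A | IsAhoCluster R A}

/-- The union of the leaf sets of the triples in `R`. -/
def tripleLeaves (R : Set (V × V × V)) : Set V :=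
  {v | ∃ t ∈ R, v = t.1 ∨ v = t.2.1 ∨ v = t.2.2}

end Aho

/-! ### The reduction from Exact 3-Cover (X3C)

Given an X3C instance, a set `𝔖` with `|𝔖| = 3t` and a collection `𝒞 = {C_1,…,C_m}`
of 3-element subsets of `𝔖`, set `r = 18t²`, `k = 6r(m−t) + r − 18t` and `q = 3k`.
The constructed 2-colored digraph `(G,σ)` (colors: black = `true`, white = `false`)
has vertex set `S ⊍ (X_1 ⊍ ⋯ ⊍ X_m) ⊍ (Y_1 ⊍ ⋯ ⊍ Y_m)`, where `S` contains a black and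
a white copy of each `s ∈ 𝔖`, each `X_i` has `r` black and `r` white vertices and each
`Y_i` has `q` black and `q` white vertices. -/

/-- The vertex set of the reduction graph. -/
abbrev Vred (SS : Type*) (m r q : ℕ) : Type _ :=
  (SS × Bool) ⊕ ((Fin m × Fin r × Bool) ⊕ (Fin m × Fin q × Bool))

/-- The coloring of the reduction graph (black = `true`, white = `false`). -/
def sigmaRed {SS : Type*} {m r q : ℕ} : Vred SS m r q → Bool
  | Sum.inl (_, c) => c
  | Sum.inr (Sum.inl (_, _, c)) => c
  | Sum.inr (Sum.inr (_, _, c)) => c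

/-- The set `S` of vertices of the reduction graph. -/
def Sset {SS : Type*} {m r q : ℕ} : Set (Vred SS m r q) :=
  Set.range Sum.inl

/-- The set `X_i` of vertices of the reduction graph. -/
def Xset {SS : Type*} {m r q : ℕ} (i : Fin m) : Set (Vred SS m r q) :=
  {v | ∃ p c, v = Sum.inr (Sum.inl (i, p, c))}

/-- The set `Y_i` of vertices of the reduction graph. -/
def Yset {SS : Type*} {m r q : ℕ} (i : Fin m) : Set (Vred SS m r q) :=
  {v | ∃ p c, v = Sum.inr (Sum.inr (i, p, c))}

/-- The arc set of the reduction graph: both arcs between every black and every white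
vertex of `S`; all arcs from black to white vertices within each `X_i`; both arcs
between every black and every white vertex within each `Y_i`; all arcs `(x,y)` with
`x ∈ X_i`, `y ∈ Y_i` of distinct colors; and for each `i` and each `s ∈ C_i` the arcs
`(x, s_b)` for white `x ∈ X_i` and `(x, s_w)` for black `x ∈ X_i`. -/
def Ered {SS : Type*} {m r q : ℕ} (𝒞 : Fin m → Finset SS) :
    Set (Vred SS m r q × Vred SS m r q) :=
  {p | match p with
    | (Sum.inl (_, c), Sum.inl (_, c')) => c ≠ c'
    | (Sum.inr (Sum.inl (i, _, c)), Sum.inr (Sum.inl (i', _, c'))) =>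
        i = i' ∧ c = true ∧ c' = false
    | (Sum.inr (Sum.inr (i, _, c)), Sum.inr (Sum.inr (i', _, c'))) => i = i' ∧ c ≠ c'
    | (Sum.inr (Sum.inl (i, _, c)), Sum.inr (Sum.inr (j, _, c'))) => i = j ∧ c ≠ c'
    | (Sum.inr (Sum.inl (i, _, c)), Sum.inl (s, c')) => s ∈ 𝒞 i ∧ c ≠ c'
    | _ => False}

/-- `r = 18t²`. -/
def rr (t : ℕ) : ℕ := 18 * t ^ 2

/-- `k = 6r(m−t) + r − 18t`. -/
def kk (t m : ℕ) : ℕ := 6 * rr t * (m - t) + rr t - 18 * t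

/-- `q = 3·(6r(m−t) + r − 18t)`. -/
def qq (t m : ℕ) : ℕ := 3 * kk t m

/-- The X3C instance `(𝔖, 𝒞)` has an exact 3-cover: a subcollection `𝒞' ⊆ 𝒞` with
`|𝒞'| = t` whose union is `𝔖`. -/
def HasExact3Cover {SS : Type*} {m : ℕ} (t : ℕ) (𝒞 : Fin m → Finset SS) : Prop :=
  ∃ I : Finset (Fin m), I.card = t ∧ ∀ s : SS, ∃ i ∈ I, s ∈ 𝒞 i


section Aux

namespace PhyloTree
variable {V : Type*}

lemma mem_lca_left (T : PhyloTree V) (x y : V) : x ∈ T.lca x y :=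
  Set.mem_sInter.mpr fun _ hA => hA.2.1

lemma mem_lca_right (T : PhyloTree V) (x y : V) : y ∈ T.lca x y :=
  Set.mem_sInter.mpr fun _ hA => hA.2.2

lemma lca_subset (T : PhyloTree V) {x y : V} {P : Set V} (hP : P ∈ T.clusters)
    (hx : x ∈ P) (hy : y ∈ P) : T.lca x y ⊆ P :=
  Set.sInter_subset_of_mem ⟨hP, hx, hy⟩

lemma lca_comm (T : PhyloTree V) (x y : V) : T.lca x y = T.lca y x := by
  have h : {A | A ∈ T.clusters ∧ x ∈ A ∧ y ∈ A} = {A | A ∈ T.clusters ∧ y ∈ A ∧ x ∈ A} := by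
    ext A; simp only [Set.mem_setOf_eq]; tauto
  unfold lca; rw [h]

lemma lca_mem_clusters (T : PhyloTree V) [Finite V] (x y : V) :
    T.lca x y ∈ T.clusters := by
  set S : Set (Set V) := {A | A ∈ T.clusters ∧ x ∈ A ∧ y ∈ A} with hS
  have hfin : S.Finite := Set.toFinite S
  have hne : Set.univ ∈ S := ⟨T.univ_mem, trivial, trivial⟩
  obtain ⟨M, hMS, hMmin⟩ : ∃ M ∈ S, ∀ A ∈ S, A ⊆ M → M = A := by
    obtain ⟨M, hMS, hM⟩ := hfin.exists_minimal ⟨_, hne⟩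
    exact ⟨M, hMS, fun A hA h => Set.Subset.antisymm (hM hA h) h⟩
  have hMsub : ∀ A ∈ S, M ⊆ A := by
    intro A hA
    rcases T.nested M hMS.1 A hA.1 with h | h | h
    · exact h
    · have : M = A := hMmin A hA h
      exact this.symm ▸ Set.Subset.rfl
    · exact absurd h (Set.not_disjoint_iff.mpr ⟨x, hMS.2.1, hA.2.1⟩)
  have : T.lca x y = M := Set.Subset.antisymm (Set.sInter_subset_of_mem hMS)
    (Set.subset_sInter hMsub)
  rw [this]; exact hMS.1

end PhyloTree

open Classical in
lemma card_le_ncard_of_maps {α β : Type*} (s : Finset α) (F : Set β) (hFfin : F.Finite)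
    (f : α → β) (hf : Set.InjOn f ↑s) (h : ∀ a ∈ s, f a ∈ F) : s.card ≤ F.ncard := by
  have h1 : (f '' ↑s).ncard = s.card := by
    rw [Set.ncard_image_of_injOn hf, Set.ncard_coe_finset]
  have h2 : f '' ↑s ⊆ F := by rintro _ ⟨a, ha, rfl⟩; exact h a (by simpa using ha)
  calc s.card = (f '' ↑s).ncard := h1.symm
    _ ≤ F.ncard := Set.ncard_le_ncard h2 hFfin

lemma kk_pos (t m : ℕ) (ht : 1 ≤ t) (hm : 2 ≤ m) : 1 ≤ kk t m := by
  unfold kk rr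
  rcases le_or_gt m t with h | h
  · have ht2' : 2 ≤ t := le_trans hm h
    have : 18 * t + 1 ≤ 18 * t ^ 2 := by nlinarith
    omega
  · have h1 : 1 ≤ m - t := by omega
    have : 18 * t + 1 ≤ 6 * (18 * t ^ 2) * (m - t) + 18 * t ^ 2 := by nlinarith
    omega

open Classical in
lemma master_no_cross {SS : Type*} [Fintype SS] (t m : ℕ)
    (𝒞 : Fin m → Finset SS)
    (F : Set (Vred SS m (rr t) (qq t m) × Vred SS m (rr t) (qq t m)))
    (hF : F.ncard ≤ kk t m)
    (T : PhyloTree (Vred SS m (rr t) (qq t m)))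
    (hT : Explains T sigmaRed (fun u v => (u, v) ∈ symmDiff (Ered 𝒞) F))
    (i j : Fin m) (hij : i ≠ j)
    (p₁ : Fin (rr t)) (c₁ : Bool) (a₁ : SS) (b₁ : Bool)
    (p₂ : Fin (rr t)) (c₂ : Bool) (a₂ : SS) (b₂ : Bool) (hb : b₁ ≠ b₂)
    (harc1 : ((Sum.inr (Sum.inl (i, p₁, c₁)) : Vred SS m (rr t) (qq t m)),
        Sum.inl (a₁, b₁)) ∈ symmDiff (Ered 𝒞) F)
    (harc2 : ((Sum.inr (Sum.inl (j, p₂, c₂)) : Vred SS m (rr t) (qq t m)),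
        Sum.inl (a₂, b₂)) ∈ symmDiff (Ered 𝒞) F)
    (hAB : T.lca (Sum.inr (Sum.inl (i, p₁, c₁))) (Sum.inl (a₁, b₁)) ⊆
           T.lca (Sum.inr (Sum.inl (j, p₂, c₂))) (Sum.inl (a₂, b₂))) : False := by
  have hFfin : F.Finite := Set.toFinite F
  have ht : 1 ≤ t := by
    rcases Nat.eq_zero_or_pos t with h | h
    · exact absurd p₁.2 (by simp [h, rr])
    · exact h
  have hm : 2 ≤ m := by
    have h1 := i.2; have h2 := j.2
    have h3 : i.val ≠ j.val := fun h => hij (Fin.ext h)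
    omega
  have hk1 : 1 ≤ kk t m := kk_pos t m ht hm
  have hq : qq t m = 3 * kk t m := rfl
  set x₁ : Vred SS m (rr t) (qq t m) := Sum.inr (Sum.inl (i, p₁, c₁)) with hx₁
  set x₂ : Vred SS m (rr t) (qq t m) := Sum.inr (Sum.inl (j, p₂, c₂)) with hx₂
  set s₁ : Vred SS m (rr t) (qq t m) := Sum.inl (a₁, b₁) with hs₁
  set s₂ : Vred SS m (rr t) (qq t m) := Sum.inl (a₂, b₂) with hs₂
  have bm1 := (hT x₁ s₁).mp harc1
  have bm2 := (hT x₂ s₂).mp harc2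
  have hc₁ : c₁ = b₂ := by
    have h := bm1.1
    simp only [hx₁, hs₁, sigmaRed] at h
    cases c₁ <;> cases b₁ <;> cases b₂ <;> simp_all
  have hc₂ : c₂ = b₁ := by
    have h := bm2.1
    simp only [hx₂, hs₂, sigmaRed] at h
    cases c₂ <;> cases b₁ <;> cases b₂ <;> simp_all
  -- step 1: find y ∈ Y_i of color b₁ with (x₁,y) ∉ F
  set bad₁ : Finset (Fin (qq t m)) :=
    Finset.univ.filter (fun p => (x₁, (Sum.inr (Sum.inr (i, p, b₁)) :
      Vred SS m (rr t) (qq t m))) ∈ F) with hbad₁def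
  have hbad₁ : bad₁.card ≤ kk t m := by
    refine le_trans (card_le_ncard_of_maps bad₁ F hFfin
      (fun p => (x₁, Sum.inr (Sum.inr (i, p, b₁)))) ?_ ?_) hF
    · intro p _ p' _ h; simpa using h
    · intro p hp; exact (Finset.mem_filter.mp hp).2
  obtain ⟨p₀, hp₀⟩ : ∃ p, p ∉ bad₁ := by
    by_contra hcon
    push_neg at hcon
    have heq : bad₁ = Finset.univ := Finset.eq_univ_iff_forall.mpr hcon
    rw [heq, Finset.card_univ, Fintype.card_fin] at hbad₁
    omega
  set y : Vred SS m (rr t) (qq t m) := Sum.inr (Sum.inr (i, p₀, b₁)) with hy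
  have hyF : (x₁, y) ∉ F := fun h => hp₀ (Finset.mem_filter.mpr ⟨Finset.mem_univ _, h⟩)
  have hyE : (x₁, y) ∈ Ered 𝒞 := by
    simp only [hx₁, hy, Ered, Set.mem_setOf_eq]
    exact ⟨trivial, by rw [hc₁]; exact hb.symm⟩
  have harcy : (x₁, y) ∈ symmDiff (Ered 𝒞) F :=
    Set.mem_symmDiff.mpr (Or.inl ⟨hyE, hyF⟩)
  have bm_y := (hT x₁ y).mp harcy
  have h3 : T.lca x₁ y ⊆ T.lca x₁ s₁ := bm_y.2 s₁ rfl
  -- step 2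
  set w : Fin (qq t m) → Vred SS m (rr t) (qq t m) :=
    fun p => Sum.inr (Sum.inr (i, p, b₂)) with hw
  set bad₂ : Finset (Fin (qq t m)) :=
    Finset.univ.filter (fun p => (y, w p) ∈ F) with hbad₂def
  have hbad₂ : bad₂.card ≤ kk t m := by
    refine le_trans (card_le_ncard_of_maps bad₂ F hFfin (fun p => (y, w p)) ?_ ?_) hF
    · intro p _ p' _ h; simp only [hw, Prod.mk.injEq] at h
      simpa using h.2
    · intro p hp; exact (Finset.mem_filter.mp hp).2
  set good : Finset (Fin (qq t m)) :=
    Finset.univ.filter (fun p => ¬ ((y, w p) ∈ F)) with hgooddef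
  have hsplit : bad₂.card + good.card = qq t m := by
    rw [hbad₂def, hgooddef, Finset.card_filter_add_card_filter_not,
      Finset.card_univ, Fintype.card_fin]
  have key : ∀ p ∈ good, (x₂, w p) ∈ F := by
    intro p hp
    have hwF : (y, w p) ∉ F := (Finset.mem_filter.mp hp).2
    have hwE : (y, w p) ∈ Ered 𝒞 := by
      simp only [hy, hw, Ered, Set.mem_setOf_eq]
      exact ⟨trivial, hb⟩
    have bm_w := (hT y (w p)).mp (Set.mem_symmDiff.mpr (Or.inl ⟨hwE, hwF⟩))
    have h1 : T.lca y (w p) ⊆ T.lca y x₁ := by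
      refine bm_w.2 x₁ ?_
      simp only [hx₁, hw, sigmaRed, hc₁]
    have hwA : w p ∈ T.lca x₁ s₁ := by
      have := h1 (T.mem_lca_right y (w p))
      rw [T.lca_comm y x₁] at this
      exact h3 this
    have hwB : w p ∈ T.lca x₂ s₂ := hAB hwA
    have bmx : bestMatch T sigmaRed x₂ (w p) := by
      refine ⟨?_, fun z hz => ?_⟩
      · simp only [hx₂, hw, sigmaRed, hc₂]; exact hb
      · refine le_trans (T.lca_subset (T.lca_mem_clusters x₂ s₂)
          (T.mem_lca_left x₂ s₂) hwB) (bm2.2 z ?_)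
        exact hz
    have harcw : (x₂, w p) ∈ symmDiff (Ered 𝒞) F := (hT x₂ (w p)).mpr bmx
    rcases Set.mem_symmDiff.mp harcw with ⟨hE, _⟩ | ⟨hFm, _⟩
    · exfalso
      simp only [hx₂, hw, Ered, Set.mem_setOf_eq] at hE
      exact hij hE.1.symm
    · exact hFm
  have hfin : good.card ≤ F.ncard := by
    refine card_le_ncard_of_maps good F hFfin (fun p => (x₂, w p)) ?_ key
    · intro p _ p' _ h; simp only [hw, Prod.mk.injEq] at h
      simpa using h.2
  omega

end Aux

/-- Claim: deletions-in-S.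
Let `F ⊆ V×V` be a loop-free arc set with `|F| ≤ k` such that `(G△F, σ)` is a BMG, and
let `s₁, s₂ ∈ S` be vertices such that `G△F` contains arcs `(x₁,s₁)` and `(x₂,s₂)` for
some `x₁ ∈ X_i` and `x₂ ∈ X_j` with `i ≠ j`. Then neither `(s₁,s₂)` nor `(s₂,s₁)` is an
arc of `G△F`. -/
theorem stmt19 {SS : Type*} [Fintype SS] [DecidableEq SS] (t m : ℕ)
    (hcard : Fintype.card SS = 3 * t)
    (𝒞 : Fin m → Finset SS) (h𝒞 : ∀ i, (𝒞 i).card = 3)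
    (F : Set (Vred SS m (rr t) (qq t m) × Vred SS m (rr t) (qq t m)))
    (hloop : ∀ v, (v, v) ∉ F) (hF : F.ncard ≤ kk t m)
    (hbmg : IsBMG (fun u v => (u, v) ∈ symmDiff (Ered 𝒞) F) sigmaRed) :
    ∀ (s₁ s₂ : Vred SS m (rr t) (qq t m)), s₁ ∈ Sset → s₂ ∈ Sset →
      ∀ (i j : Fin m), i ≠ j →
        ∀ x₁ ∈ Xset i, ∀ x₂ ∈ Xset j,
          (x₁, s₁) ∈ symmDiff (Ered 𝒞) F → (x₂, s₂) ∈ symmDiff (Ered 𝒞) F →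
          (s₁, s₂) ∉ symmDiff (Ered 𝒞) F ∧ (s₂, s₁) ∉ symmDiff (Ered 𝒞) F := by
  intro s₁ s₂ hs₁ hs₂ i j hij x₁ hx₁ x₂ hx₂ h1 h2
  obtain ⟨⟨a₁, d₁⟩, rfl⟩ := hs₁
  obtain ⟨⟨a₂, d₂⟩, rfl⟩ := hs₂
  obtain ⟨p₁, c₁, rfl⟩ := hx₁
  obtain ⟨p₂, c₂, rfl⟩ := hx₂
  obtain ⟨T, hT⟩ := hbmg
  have bm1 := (hT _ _).mp h1
  have bm2 := (hT _ _).mp h2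
  have hc₁ : c₁ ≠ d₁ := by simpa [sigmaRed] using bm1.1
  have hc₂ : c₂ ≠ d₂ := by simpa [sigmaRed] using bm2.1
  constructor
  · intro harc
    have bms := (hT _ _).mp harc
    have hd : d₁ ≠ d₂ := by simpa [sigmaRed] using bms.1
    have hcd : sigmaRed (Sum.inr (Sum.inl (i, p₁, c₁)) : Vred SS m (rr t) (qq t m)) =
        sigmaRed (Sum.inl (a₂, d₂) : Vred SS m (rr t) (qq t m)) := by
      simp only [sigmaRed]
      cases c₁ <;> cases d₁ <;> cases d₂ <;> simp_all
    have hsub := bms.2 _ hcd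
    have hs₂A : (Sum.inl (a₂, d₂) : Vred SS m (rr t) (qq t m)) ∈
        T.lca (Sum.inr (Sum.inl (i, p₁, c₁))) (Sum.inl (a₁, d₁)) := by
      rw [T.lca_comm]
      exact hsub (T.mem_lca_right _ _)
    have hs₂B : (Sum.inl (a₂, d₂) : Vred SS m (rr t) (qq t m)) ∈
        T.lca (Sum.inr (Sum.inl (j, p₂, c₂))) (Sum.inl (a₂, d₂)) := T.mem_lca_right _ _
    rcases T.nested _ (T.lca_mem_clusters (Sum.inr (Sum.inl (i, p₁, c₁))) (Sum.inl (a₁, d₁)))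
      _ (T.lca_mem_clusters (Sum.inr (Sum.inl (j, p₂, c₂))) (Sum.inl (a₂, d₂))) with
      hAB | hBA | hdis
    · exact master_no_cross t m 𝒞 F hF T hT i j hij p₁ c₁ a₁ d₁ p₂ c₂ a₂ d₂ hd h1 h2 hAB
    · exact master_no_cross t m 𝒞 F hF T hT j i hij.symm p₂ c₂ a₂ d₂ p₁ c₁ a₁ d₁
        hd.symm h2 h1 hBA
    · exact absurd hdis (Set.not_disjoint_iff.mpr ⟨_, hs₂A, hs₂B⟩)
  · intro harc
    have bms := (hT _ _).mp harc
    have hd : d₂ ≠ d₁ := by simpa [sigmaRed] using bms.1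
    have hcd : sigmaRed (Sum.inr (Sum.inl (j, p₂, c₂)) : Vred SS m (rr t) (qq t m)) =
        sigmaRed (Sum.inl (a₁, d₁) : Vred SS m (rr t) (qq t m)) := by
      simp only [sigmaRed]
      cases c₂ <;> cases d₁ <;> cases d₂ <;> simp_all
    have hsub := bms.2 _ hcd
    have hs₁B : (Sum.inl (a₁, d₁) : Vred SS m (rr t) (qq t m)) ∈
        T.lca (Sum.inr (Sum.inl (j, p₂, c₂))) (Sum.inl (a₂, d₂)) := by
      rw [T.lca_comm]
      exact hsub (T.mem_lca_right _ _)
    have hs₁A : (Sum.inl (a₁, d₁) : Vred SS m (rr t) (qq t m)) ∈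
        T.lca (Sum.inr (Sum.inl (i, p₁, c₁))) (Sum.inl (a₁, d₁)) := T.mem_lca_right _ _
    rcases T.nested _ (T.lca_mem_clusters (Sum.inr (Sum.inl (i, p₁, c₁))) (Sum.inl (a₁, d₁)))
      _ (T.lca_mem_clusters (Sum.inr (Sum.inl (j, p₂, c₂))) (Sum.inl (a₂, d₂))) with
      hAB | hBA | hdis
    · exact master_no_cross t m 𝒞 F hF T hT i j hij p₁ c₁ a₁ d₁ p₂ c₂ a₂ d₂ hd.symm h1 h2 hAB
    · exact master_no_cross t m 𝒞 F hF T hT j i hij.symm p₂ c₂ a₂ d₂ p₁ c₁ a₁ d₁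
        hd h2 h1 hBA
    · exact absurd hdis (Set.not_disjoint_iff.mpr ⟨_, hs₁A, hs₁B⟩)
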